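/- Let 𝒱 be a Hilbert space and Q a continuous sesquilinear form on 𝒱 × 𝒱. Assume there exist bounded operators Φ₁, Φ₂ ∈ ℒ(𝒱) and α > 0 such that for all u ∈ 𝒱: |Q(u,u)| + |Q(Φ₁u, u)| ≥ α‖u‖²_𝒱 and |Q(u,u)| + |Q(u, Φ₂u)| ≥ α‖u‖²_𝒱. Then the bounded operator 𝒜 : 𝒱 → 𝒱 defined by Q(u,v) = ⟨𝒜u, v⟩_𝒱 for all u,v ∈ 𝒱 is a continuous isomorphism of 𝒱 onto 𝒱 with bounded inverse. -/

import Mathlib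

open scoped InnerProductSpace

noncomputable section

/-- Generalised Lax–Milgram theorem of Almog–Helffer (Theorem 2.1 in
[AlmogHe15]).  Here `Q` is a continuous sesquilinear form (linear in the first
variable, conjugate-linear in the second), and `𝒜` is the bounded operator
with `Q(u,v) = ⟨𝒜u, v⟩` (i.e. `⟪v, 𝒜u⟫` in Mathlib's convention). -/
theorem stmt8 {𝒱 : Type*} [NormedAddCommGroup 𝒱] [InnerProductSpace ℂ 𝒱]
    [CompleteSpace 𝒱]
    (Q : 𝒱 →L[ℂ] (𝒱 →SL[starRingEnd ℂ] ℂ))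
    (Φ₁ Φ₂ : 𝒱 →L[ℂ] 𝒱) (α : ℝ) (hα : 0 < α)
    (h1 : ∀ u : 𝒱, ‖Q u u‖ + ‖Q (Φ₁ u) u‖ ≥ α * ‖u‖ ^ 2)
    (h2 : ∀ u : 𝒱, ‖Q u u‖ + ‖Q u (Φ₂ u)‖ ≥ α * ‖u‖ ^ 2)
    (𝒜 : 𝒱 →L[ℂ] 𝒱)
    (h𝒜 : ∀ u v : 𝒱, Q u v = ⟪v, 𝒜 u⟫_ℂ) :
    ∃ e : 𝒱 ≃L[ℂ] 𝒱, (e : 𝒱 → 𝒱) = 𝒜 := by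
  -- bound ‖Q u v‖ ≤ ‖v‖ * ‖𝒜 u‖
  have hQb : ∀ u v : 𝒱, ‖Q u v‖ ≤ ‖v‖ * ‖𝒜 u‖ := by
    intro u v
    rw [h𝒜 u v]
    exact norm_inner_le_norm v (𝒜 u)
  -- lower bound : ‖u‖ ≤ C * ‖𝒜 u‖
  set C : ℝ := (1 + ‖Φ₂‖) / α with hC
  have hC0 : 0 ≤ C := by positivity
  have hlow : ∀ u : 𝒱, ‖u‖ ≤ C * ‖𝒜 u‖ := by
    intro u
    have h := h2 u
    have hb : ‖Q u u‖ + ‖Q u (Φ₂ u)‖ ≤ (1 + ‖Φ₂‖) * ‖u‖ * ‖𝒜 u‖ := by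
      have b1 := hQb u u
      have b2 := hQb u (Φ₂ u)
      have b3 : ‖Φ₂ u‖ ≤ ‖Φ₂‖ * ‖u‖ := Φ₂.le_opNorm u
      nlinarith [norm_nonneg (𝒜 u), norm_nonneg u]
    have key : α * ‖u‖ ^ 2 ≤ (1 + ‖Φ₂‖) * ‖u‖ * ‖𝒜 u‖ := le_trans h hb
    rcases eq_or_lt_of_le (norm_nonneg u) with h0 | h0
    · rw [← h0]; positivity
    · rw [hC, div_mul_eq_mul_div, le_div_iff₀ hα]
      nlinarith
  have hanti : AntilipschitzWith (Real.toNNReal C) 𝒜 := by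
    apply ContinuousLinearMap.antilipschitz_of_bound
    intro x
    simpa [Real.coe_toNNReal C hC0] using hlow x
  have hinj : Function.Injective 𝒜 := hanti.injective
  -- closed range
  have hclosed : IsClosed (Set.range (𝒜 : 𝒱 → 𝒱)) :=
    hanti.isClosed_range 𝒜.uniformContinuous
  -- density: the orthogonal complement of the range is trivial
  have hcomplete : IsComplete (Set.range (𝒜 : 𝒱 → 𝒱)) := hclosed.isComplete
  have hrangeset : ((LinearMap.range (𝒜 : 𝒱 →ₗ[ℂ] 𝒱) : Submodule ℂ 𝒱) : Set 𝒱)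
      = Set.range (𝒜 : 𝒱 → 𝒱) := by
    ext x; simp [LinearMap.mem_range]
  haveI : CompleteSpace (LinearMap.range (𝒜 : 𝒱 →ₗ[ℂ] 𝒱) : Submodule ℂ 𝒱) := by
    refine IsClosed.completeSpace_coe (hs := ?_)
    rw [hrangeset]
    exact hclosed
  have horth : (LinearMap.range (𝒜 : 𝒱 →ₗ[ℂ] 𝒱) : Submodule ℂ 𝒱)ᗮ = ⊥ := by
    rw [Submodule.eq_bot_iff]
    intro v hv
    have hzero : ∀ u : 𝒱, Q u v = 0 := by
      intro u
      have h0 : ⟪𝒜 u, v⟫_ℂ = 0 :=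
        (Submodule.mem_orthogonal _ v).1 hv (𝒜 u) (LinearMap.mem_range_self _ u)
      rw [h𝒜 u v, ← inner_conj_symm, h0, map_zero]
    have := h1 v
    rw [hzero v, hzero (Φ₁ v), norm_zero, add_zero] at this
    have hv2 : ‖v‖ ^ 2 ≤ 0 := by nlinarith
    have : ‖v‖ = 0 := by nlinarith [sq_nonneg ‖v‖, norm_nonneg v]
    exact norm_eq_zero.1 this
  have hsurj : Function.Surjective 𝒜 := by
    have htop : (LinearMap.range (𝒜 : 𝒱 →ₗ[ℂ] 𝒱) : Submodule ℂ 𝒱) = ⊤ :=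
      Submodule.orthogonal_eq_bot_iff.1 horth
    intro y
    have : y ∈ LinearMap.range (𝒜 : 𝒱 →ₗ[ℂ] 𝒱) := htop ▸ Submodule.mem_top
    exact this
  exact ⟨ContinuousLinearEquiv.ofBijective 𝒜
      (LinearMap.ker_eq_bot.2 hinj) (LinearMap.range_eq_top.2 hsurj), rfl⟩
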